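/- Let (X,d) be a metric space that is locally path-connected, and let α : Fin(X) → (0,∞) be continuous. Then there exists a continuous map β : Fin(X) → (0,∞) such that for every non-empty finite set A ⊆ X and every point x with d(x,A) ≤ β(A), there is a path γ : [0,1] → X from some point of A to x with diam_d(γ([0,1])) < α(A). -/

import Mathlib

open TopologicalSpace

/-- The hyperspace of non-empty finite subsets of `X`, as a subspace of the
space of non-empty compact subsets with the Hausdorff metric (whose topology
coincides with the Vietoris topology). -/
def FinHyp (X : Type*) [MetricSpace X] : Type _ :=
  {s : NonemptyCompacts X // (s : Set X).Finite}

noncomputable instance (X : Type*) [MetricSpace X] : MetricSpace (FinHyp X) :=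
  Subtype.metricSpace

section Aux

variable {X : Type*} [MetricSpace X] [LocallyPathConnectedSpace X]

/-- The property that every set `B` at Hausdorff distance at most `δ` from `A` and every
point at distance at most `δ` from `B` can be joined to `B` by a small path. -/
def GoodRad (α : FinHyp X → ℝ) (A : FinHyp X) (δ : ℝ) : Prop :=
  ∀ B : FinHyp X, dist A B ≤ δ → ∀ x : X, Metric.infDist x (B.1 : Set X) ≤ δ →
    ∃ b ∈ (B.1 : Set X), ∃ γ : Path b x, Metric.diam (Set.range γ) < α B

theorem goodRad_mono {α : FinHyp X → ℝ} {A : FinHyp X} {δ δ' : ℝ} (h : δ' ≤ δ)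
    (hg : GoodRad α A δ) : GoodRad α A δ' := by
  intro B hB x hx
  exact hg B (hB.trans h) x (hx.trans h)

theorem goodRad_transfer {α : FinHyp X → ℝ} {A B : FinHyp X} {δ : ℝ}
    (hg : GoodRad α A δ) : GoodRad α B (δ - dist A B) := by
  intro C hC x hx
  have h1 : dist A C ≤ δ := by
    have := dist_triangle A B C
    linarith
  exact hg C h1 x (hx.trans (by linarith [dist_nonneg (x := A) (y := B)]))

theorem dist_finHyp_eq (A B : FinHyp X) :
    dist A B = Metric.hausdorffDist (A.1 : Set X) (B.1 : Set X) := by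
  exact Metric.NonemptyCompacts.dist_eq

theorem hausdorffEdist_ne_top (A B : FinHyp X) :
    Metric.hausdorffEDist (A.1 : Set X) (B.1 : Set X) ≠ ⊤ :=
  Metric.hausdorffEDist_ne_top_of_nonempty_of_bounded A.1.nonempty B.1.nonempty
    A.1.isCompact.isBounded B.1.isCompact.isBounded

/-- Existence of a positive good radius at every `A`. -/
theorem goodRad_pos (α : FinHyp X → ℝ) (hα : Continuous α) (hpos : ∀ A, 0 < α A)
    (A : FinHyp X) : ∃ δ > 0, GoodRad α A δ := by
  set c := α A with hc
  have hc0 : 0 < c := hpos A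
  -- continuity of α at A
  obtain ⟨r, hr0, hr⟩ : ∃ r > 0, ∀ B : FinHyp X, dist B A < r → dist (α B) (α A) < c / 2 :=
    Metric.continuous_iff.mp hα A (c / 2) (by linarith)
  -- for every point, a small path-connected neighborhood inside a small ball
  have key : ∀ p : X, ∃ d > 0, ∃ U : Set X, IsPathConnected U ∧ U ⊆ Metric.ball p (c / 8) ∧
      Metric.ball p d ⊆ U := by
    intro p
    obtain ⟨U, ⟨hU, hUpc⟩, hUsub⟩ := (path_connected_basis p).mem_iff.mp
      (Metric.ball_mem_nhds p (by linarith : (0:ℝ) < c / 8))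
    obtain ⟨d, hd0, hball⟩ := Metric.mem_nhds_iff.mp hU
    exact ⟨d, hd0, U, hUpc, hUsub, hball⟩
  choose dfun dpos Ufun hUpc hUsub hballU using key
  -- minimum over finite A
  have hfin : (A.1 : Set X).Finite := A.2
  have hne : (A.1 : Set X).Nonempty := A.1.nonempty
  set s : Finset X := hfin.toFinset with hs
  have hsne : s.Nonempty := by
    rwa [hs, Set.Finite.toFinset_nonempty]
  set m : ℝ := s.inf' hsne dfun with hm
  have hm0 : 0 < m := by
    rw [hm]
    exact (Finset.lt_inf'_iff hsne).mpr fun a _ => dpos a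
  refine ⟨min (r / 2) (m / 3), by positivity, ?_⟩
  intro B hB x hx
  have hd : dist A B ≤ min (r / 2) (m / 3) := hB
  have hdr : dist A B < r := lt_of_le_of_lt (hd.trans (min_le_left _ _)) (by linarith)
  have hdm : dist A B ≤ m / 3 := hd.trans (min_le_right _ _)
  have hxm : Metric.infDist x (B.1 : Set X) ≤ m / 3 := hx.trans (min_le_right _ _)
  -- α B is not too small
  have hαB : c / 2 < α B := by
    have := hr B (by rwa [dist_comm])
    rw [Real.dist_eq] at this
    have := abs_lt.mp this
    linarith [this.1]
  -- find b ∈ B closest to x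
  obtain ⟨b, hbB, hbx⟩ := B.1.isCompact.exists_infDist_eq_dist B.1.nonempty x
  have hxb : dist x b ≤ m / 3 := by rw [← hbx]; exact hxm
  -- find a ∈ A closest to b
  have hbA : Metric.infDist b (A.1 : Set X) ≤ m / 3 := by
    have h1 : Metric.infDist b (A.1 : Set X) ≤
        Metric.hausdorffDist (B.1 : Set X) (A.1 : Set X) :=
      Metric.infDist_le_hausdorffDist_of_mem hbB (by
        rw [Metric.hausdorffEDist_comm]; exact hausdorffEdist_ne_top A B)
    rw [Metric.hausdorffDist_comm, ← dist_finHyp_eq] at h1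
    exact h1.trans hdm
  obtain ⟨a, haA, hab⟩ := A.1.isCompact.exists_infDist_eq_dist A.1.nonempty b
  have hba : dist b a ≤ m / 3 := by rw [← hab]; exact hbA
  have has : a ∈ s := by rw [hs, Set.Finite.toFinset]; simpa using haA
  have hma : m ≤ dfun a := Finset.inf'_le dfun has
  -- both b and x lie in the path-connected set U a
  have hbU : b ∈ Ufun a := hballU a (by
    rw [Metric.mem_ball]
    calc dist b a ≤ m / 3 := hba
    _ < dfun a := by linarith)
  have hxU : x ∈ Ufun a := hballU a (by
    rw [Metric.mem_ball]
    calc dist x a ≤ dist x b + dist b a := dist_triangle x b a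
    _ ≤ m / 3 + m / 3 := add_le_add hxb hba
    _ < dfun a := by linarith)
  obtain ⟨γ, hγ⟩ := (hUpc a).joinedIn b hbU x hxU
  refine ⟨b, hbB, γ, ?_⟩
  have hrange : Set.range γ ⊆ Metric.ball a (c / 8) := by
    rintro _ ⟨t, rfl⟩
    exact hUsub a (hγ t)
  calc Metric.diam (Set.range γ) ≤ Metric.diam (Metric.ball a (c / 8)) :=
        Metric.diam_mono hrange Metric.isBounded_ball
  _ ≤ 2 * (c / 8) := Metric.diam_ball (by linarith)
  _ < α B := by linarith

end Aux

theorem exists_beta_for_paths {X : Type*} [MetricSpace X] [LocallyPathConnectedSpace X]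
    (α : FinHyp X → ℝ) (hα : Continuous α) (hpos : ∀ A, 0 < α A) :
    ∃ β : FinHyp X → ℝ, Continuous β ∧ (∀ A, 0 < β A) ∧
      ∀ A : FinHyp X, ∀ x : X, Metric.infDist x (A.1 : Set X) ≤ β A →
        ∃ a ∈ (A.1 : Set X), ∃ γ : Path a x, Metric.diam (Set.range γ) < α A := by
  classical
  set S : FinHyp X → Set ℝ := fun A => {δ : ℝ | 0 < δ ∧ δ ≤ 1 ∧ GoodRad α A δ} with hS
  have hSne : ∀ A, (S A).Nonempty := by
    intro A
    obtain ⟨δ, hδ0, hδ⟩ := goodRad_pos α hα hpos A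
    exact ⟨min δ 1, lt_min hδ0 one_pos, min_le_right _ _,
      goodRad_mono (min_le_left _ _) hδ⟩
  have hSbdd : ∀ A, BddAbove (S A) := fun A => ⟨1, fun δ hδ => hδ.2.1⟩
  set f : FinHyp X → ℝ := fun A => sSup (S A) with hf
  have hf0 : ∀ A, 0 < f A := by
    intro A
    obtain ⟨δ, hδ⟩ := hSne A
    exact lt_of_lt_of_le hδ.1 (le_csSup (hSbdd A) hδ)
  -- one-sided Lipschitz estimate
  have hlip : ∀ A B : FinHyp X, f A ≤ f B + dist A B := by
    intro A B
    refine csSup_le (hSne A) fun δ hδ => ?_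
    rcases le_or_gt δ (dist A B) with h | h
    · linarith [(hf0 B).le]
    · have hmem : δ - dist A B ∈ S B :=
        ⟨by linarith, by linarith [hδ.2.1, dist_nonneg (x := A) (y := B)],
          goodRad_transfer hδ.2.2⟩
      linarith [le_csSup (hSbdd B) hmem]
  have hfc : Continuous f := by
    refine (LipschitzWith.of_dist_le_mul (K := 1) fun A B => ?_).continuous
    rw [Real.dist_eq, NNReal.coe_one, one_mul, abs_sub_le_iff]
    constructor
    · linarith [hlip A B]
    · linarith [hlip B A, dist_comm A B]
  refine ⟨fun A => f A / 2, by fun_prop, fun A => by linarith [hf0 A], ?_⟩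
  intro A x hx
  obtain ⟨δ, hδS, hδlt⟩ := exists_lt_of_lt_csSup (hSne A) (by linarith [hf0 A] : f A / 2 < f A)
  exact hδS.2.2 A (by rw [dist_self]; exact hδS.1.le) x (hx.trans hδlt.le)
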